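/- arXiv:1010.4111 — 3 statements merged into one kernel-verified Lean document; each statement's English description precedes it below -/
import Mathlib

section
/- For any ordinals α, γ, β with γ < β and α ≥ 1, (α ⊕ α × 3_2(γ)) × 3_2(γ) ≤ α × 3_2(β), where ⊕ is natural sum and × natural product. -/
open Ordinal

universe u

namespace Ordinal

/-- Natural addition (Hessenberg sum), with its definition from the older Mathlib. -/
noncomputable def nadd : Ordinal.{u} → Ordinal.{u} → Ordinal.{u}
  | a, b => max (⨆ x : Set.Iio a, Order.succ (nadd x.1 b)) (⨆ x : Set.Iio b, Order.succ (nadd a x.1))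
termination_by a b => (a, b)
decreasing_by
  · exact Prod.Lex.left _ _ x.2
  · exact Prod.Lex.right _ x.2

/-- Natural multiplication (Hessenberg product), with its definition from the older Mathlib. -/
noncomputable def nmul : Ordinal.{u} → Ordinal.{u} → Ordinal.{u}
  | a, b => sInf {c | ∀ a' < a, ∀ b' < b, nadd (nmul a' b) (nmul a b') < nadd c (nmul a' b')}
termination_by a b => (a, b)

end Ordinal

infixl:65 " ♯ " => Ordinal.nadd
infixl:70 " ⨳ " => Ordinal.nmul

/-- `3_2(β) := 3^(3^β)` in ordinal exponentiation. -/
noncomputable def threeTwo (β : Ordinal) : Ordinal := (3 : Ordinal) ^ ((3 : Ordinal) ^ β)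

open Ordinal Order

namespace Ordinal

theorem nadd_eq' (a b : Ordinal.{u}) : a ♯ b =
    max (⨆ x : Set.Iio a, Order.succ (x.1 ♯ b)) (⨆ x : Set.Iio b, Order.succ (a ♯ x.1)) :=
  nadd.eq_1 a b

theorem lt_nadd_iff {a b c : Ordinal.{u}} :
    a < b ♯ c ↔ (∃ b' < b, a ≤ b' ♯ c) ∨ ∃ c' < c, a ≤ b ♯ c' := by
  rw [nadd_eq', lt_max_iff, Ordinal.lt_iSup_iff, Ordinal.lt_iSup_iff]
  simp only [Order.lt_succ_iff, Subtype.exists, Set.mem_Iio, exists_prop]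

theorem nadd_le_iff {a b c : Ordinal.{u}} :
    b ♯ c ≤ a ↔ (∀ b' < b, b' ♯ c < a) ∧ ∀ c' < c, b ♯ c' < a := by
  rw [← not_lt, lt_nadd_iff]
  simp only [not_or, not_exists, not_and, not_le]

theorem nadd_lt_nadd_left {b c : Ordinal.{u}} (h : b < c) (a : Ordinal.{u}) : a ♯ b < a ♯ c :=
  lt_nadd_iff.2 (Or.inr ⟨b, h, le_rfl⟩)

theorem nadd_lt_nadd_right {b c : Ordinal.{u}} (h : b < c) (a : Ordinal.{u}) : b ♯ a < c ♯ a :=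
  lt_nadd_iff.2 (Or.inl ⟨b, h, le_rfl⟩)

theorem nadd_le_nadd_left {b c : Ordinal.{u}} (h : b ≤ c) (a : Ordinal.{u}) : a ♯ b ≤ a ♯ c := by
  rcases h.lt_or_eq with h | rfl
  · exact (nadd_lt_nadd_left h a).le
  · exact le_rfl

theorem nadd_le_nadd_right {b c : Ordinal.{u}} (h : b ≤ c) (a : Ordinal.{u}) : b ♯ a ≤ c ♯ a := by
  rcases h.lt_or_eq with h | rfl
  · exact (nadd_lt_nadd_right h a).le
  · exact le_rfl

theorem nadd_le_nadd {a b c d : Ordinal.{u}} (h₁ : a ≤ b) (h₂ : c ≤ d) : a ♯ c ≤ b ♯ d :=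
  (nadd_le_nadd_left h₂ a).trans (nadd_le_nadd_right h₁ d)

theorem nadd_lt_nadd_of_lt_of_le {a b c d : Ordinal.{u}} (h₁ : a < b) (h₂ : c ≤ d) :
    a ♯ c < b ♯ d :=
  (nadd_lt_nadd_right h₁ c).trans_le (nadd_le_nadd_left h₂ b)

theorem nadd_lt_nadd_of_le_of_lt {a b c d : Ordinal.{u}} (h₁ : a ≤ b) (h₂ : c < d) :
    a ♯ c < b ♯ d :=
  (nadd_le_nadd_right h₁ c).trans_lt (nadd_lt_nadd_left h₂ b)

theorem nadd_lt_nadd_iff_left (a : Ordinal.{u}) {b c : Ordinal.{u}} : a ♯ b < a ♯ c ↔ b < c :=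
  ⟨fun h => lt_of_not_ge fun h' => not_lt.2 (nadd_le_nadd_left h' a) h,
    fun h => nadd_lt_nadd_left h a⟩

theorem nadd_le_nadd_iff_left (a : Ordinal.{u}) {b c : Ordinal.{u}} : a ♯ b ≤ a ♯ c ↔ b ≤ c := by
  rw [← not_lt, ← not_lt, nadd_lt_nadd_iff_left]

theorem nadd_le_comm (a b : Ordinal.{u}) : a ♯ b ≤ b ♯ a := by
  induction a using Ordinal.induction generalizing b with
  | _ a IHa =>
  induction b using Ordinal.induction with
  | _ b IHb =>
  rw [nadd_le_iff]
  exact ⟨fun a' ha' => (IHa a' ha' b).trans_lt (nadd_lt_nadd_left ha' b),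
    fun b' hb' => (IHb b' hb').trans_lt (nadd_lt_nadd_right hb' a)⟩

theorem nadd_comm (a b : Ordinal.{u}) : a ♯ b = b ♯ a :=
  le_antisymm (nadd_le_comm a b) (nadd_le_comm b a)

@[simp] theorem nadd_zero (a : Ordinal.{u}) : a ♯ 0 = a := by
  induction a using Ordinal.induction with
  | _ a IH =>
  apply le_antisymm
  · rw [nadd_le_iff]
    refine ⟨fun a' ha' => by rw [IH a' ha']; exact ha', fun c hc => ?_⟩
    exact absurd hc (not_lt_of_ge (zero_le : (0 : Ordinal.{u}) ≤ c))
  · refine le_of_forall_lt fun c hc => ?_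
    calc c = c ♯ 0 := (IH c hc).symm
      _ < a ♯ 0 := nadd_lt_nadd_right hc 0

@[simp] theorem zero_nadd (a : Ordinal.{u}) : 0 ♯ a = a := by
  rw [nadd_comm, nadd_zero]

theorem nadd_succ (a b : Ordinal.{u}) : a ♯ Order.succ b = Order.succ (a ♯ b) := by
  induction a using Ordinal.induction with
  | _ a IH =>
  apply le_antisymm
  · rw [nadd_le_iff]
    refine ⟨fun a' ha' => ?_, fun c hc => ?_⟩
    · rw [IH a' ha']; exact Order.succ_lt_succ (nadd_lt_nadd_right ha' b)
    · exact Order.lt_succ_iff.2 (nadd_le_nadd_left (Order.lt_succ_iff.1 hc) a)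
  · exact Order.succ_le_of_lt (nadd_lt_nadd_left (Order.lt_succ b) a)

theorem nadd_one (a : Ordinal.{u}) : a ♯ 1 = a + 1 := by
  have h := nadd_succ a 0
  rw [nadd_zero, Order.succ_eq_add_one, Order.succ_eq_add_one, zero_add] at h
  exact h

theorem nadd_assoc (a b c : Ordinal.{u}) : a ♯ b ♯ c = a ♯ (b ♯ c) := by
  induction a using Ordinal.induction generalizing b c with
  | _ a IHa =>
  induction b using Ordinal.induction generalizing c with
  | _ b IHb =>
  induction c using Ordinal.induction with
  | _ c IHc =>
  apply le_antisymm
  · rw [nadd_le_iff]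
    refine ⟨fun x hx => ?_, fun c' hc' => ?_⟩
    · rcases lt_nadd_iff.1 hx with ⟨a', ha', hx'⟩ | ⟨b', hb', hx'⟩
      · calc x ♯ c ≤ a' ♯ b ♯ c := nadd_le_nadd_right hx' c
          _ = a' ♯ (b ♯ c) := IHa a' ha' b c
          _ < a ♯ (b ♯ c) := nadd_lt_nadd_right ha' _
      · calc x ♯ c ≤ a ♯ b' ♯ c := nadd_le_nadd_right hx' c
          _ = a ♯ (b' ♯ c) := IHb b' hb' c
          _ < a ♯ (b ♯ c) := nadd_lt_nadd_left (nadd_lt_nadd_right hb' c) a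
    · rw [IHc c' hc']; exact nadd_lt_nadd_left (nadd_lt_nadd_left hc' b) a
  · rw [nadd_le_iff]
    refine ⟨fun a' ha' => ?_, fun x hx => ?_⟩
    · rw [← IHa a' ha' b c]; exact nadd_lt_nadd_right (nadd_lt_nadd_right ha' b) c
    · rcases lt_nadd_iff.1 hx with ⟨b', hb', hx'⟩ | ⟨c', hc', hx'⟩
      · calc a ♯ x ≤ a ♯ (b' ♯ c) := nadd_le_nadd_left hx' a
          _ = a ♯ b' ♯ c := (IHb b' hb' c).symm
          _ < a ♯ b ♯ c := nadd_lt_nadd_right (nadd_lt_nadd_left hb' a) c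
      · calc a ♯ x ≤ a ♯ (b ♯ c') := nadd_le_nadd_left hx' a
          _ = a ♯ b ♯ c' := (IHc c' hc').symm
          _ < a ♯ b ♯ c := nadd_lt_nadd_left hc' _

instance : Std.Associative (α := Ordinal.{u}) nadd := ⟨nadd_assoc⟩

instance : Std.Commutative (α := Ordinal.{u}) nadd := ⟨nadd_comm⟩

theorem nadd_right_comm (a b c : Ordinal.{u}) : a ♯ b ♯ c = a ♯ c ♯ b := by
  rw [nadd_assoc, nadd_comm b, ← nadd_assoc]

theorem nadd_nat {a : Ordinal.{u}} (n : ℕ) : a ♯ n = a + n := by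
  induction n with
  | zero => simp
  | succ n IH =>
    rw [Nat.cast_succ, ← add_assoc, ← IH, ← nadd_one, ← nadd_one, nadd_assoc]

theorem le_self_nadd {a b : Ordinal.{u}} : a ≤ a ♯ b := by
  calc a = a ♯ 0 := (nadd_zero a).symm
    _ ≤ a ♯ b := nadd_le_nadd_left (zero_le : (0 : Ordinal.{u}) ≤ b) a

theorem add_le_nadd (a b : Ordinal.{u}) : a + b ≤ a ♯ b := by
  induction b using Ordinal.induction with
  | _ b IH =>
  refine le_of_forall_lt fun c hc => ?_
  rcases lt_or_ge c a with hca | hca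
  · exact hca.trans_le le_self_nadd
  · have hd : c - a < b :=
      (add_lt_add_iff_left a).1 ((Ordinal.add_sub_cancel_of_le hca).trans_lt hc)
    calc c = a + (c - a) := (Ordinal.add_sub_cancel_of_le hca).symm
      _ ≤ a ♯ (c - a) := IH _ hd
      _ < a ♯ b := nadd_lt_nadd_left hd a

theorem nmul_eq' (a b : Ordinal.{u}) : a ⨳ b =
    sInf {c | ∀ a' < a, ∀ b' < b, a' ⨳ b ♯ a ⨳ b' < c ♯ a' ⨳ b'} :=
  nmul.eq_1 a b

theorem nmul_nonempty (a b : Ordinal.{u}) :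
    {c : Ordinal.{u} | ∀ a' < a, ∀ b' < b, a' ⨳ b ♯ a ⨳ b' < c ♯ a' ⨳ b'}.Nonempty := by
  refine ⟨⨆ p : Set.Iio a × Set.Iio b, Order.succ (p.1.1 ⨳ b ♯ a ⨳ p.2.1),
    fun a' ha' b' hb' => ?_⟩
  refine lt_of_lt_of_le ?_ le_self_nadd
  refine (Order.lt_succ _).trans_le ?_
  exact Ordinal.le_iSup (fun p : Set.Iio a × Set.Iio b => Order.succ (p.1.1 ⨳ b ♯ a ⨳ p.2.1))
    (⟨a', ha'⟩, ⟨b', hb'⟩)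

theorem nmul_nadd_lt {a b a' b' : Ordinal.{u}} (ha : a' < a) (hb : b' < b) :
    a' ⨳ b ♯ a ⨳ b' < a ⨳ b ♯ a' ⨳ b' := by
  rw [nmul_eq' a b]
  exact csInf_mem (nmul_nonempty a b) a' ha b' hb

theorem nmul_nadd_le {a b a' b' : Ordinal.{u}} (ha : a' ≤ a) (hb : b' ≤ b) :
    a' ⨳ b ♯ a ⨳ b' ≤ a ⨳ b ♯ a' ⨳ b' := by
  rcases ha.lt_or_eq with ha | rfl
  · rcases hb.lt_or_eq with hb | rfl
    · exact (nmul_nadd_lt ha hb).le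
    · rw [nadd_comm]
  · exact le_rfl

theorem lt_nmul_iff {a b c : Ordinal.{u}} :
    c < a ⨳ b ↔ ∃ a' < a, ∃ b' < b, c ♯ a' ⨳ b' ≤ a' ⨳ b ♯ a ⨳ b' := by
  refine ⟨fun h => ?_, ?_⟩
  · rw [nmul_eq'] at h
    have := notMem_of_lt_csInf h ⟨0, fun x _ => (zero_le : (0 : Ordinal.{u}) ≤ x)⟩
    simpa using this
  · rintro ⟨a', ha, b', hb, h⟩
    have := h.trans_lt (nmul_nadd_lt ha hb)
    rwa [nadd_comm (a ⨳ b), nadd_comm c, nadd_lt_nadd_iff_left] at this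

theorem nmul_le_iff {a b c : Ordinal.{u}} :
    a ⨳ b ≤ c ↔ ∀ a' < a, ∀ b' < b, a' ⨳ b ♯ a ⨳ b' < c ♯ a' ⨳ b' := by
  rw [← not_lt, lt_nmul_iff]
  simp only [not_exists, not_and, not_le]

theorem nmul_comm (a b : Ordinal.{u}) : a ⨳ b = b ⨳ a := by
  induction a using Ordinal.induction generalizing b with
  | _ a IHa =>
  induction b using Ordinal.induction with
  | _ b IHb =>
  apply le_antisymm
  · rw [nmul_le_iff]
    intro a' ha' b' hb'
    rw [IHa a' ha' b, IHb b' hb', IHa a' ha' b']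
    have := nmul_nadd_lt hb' ha'
    rwa [nadd_comm (b' ⨳ a)] at this
  · rw [nmul_le_iff]
    intro b' hb' a' ha'
    rw [← IHa a' ha' b, ← IHb b' hb', ← IHa a' ha' b']
    have := nmul_nadd_lt ha' hb'
    rwa [nadd_comm (a' ⨳ b)] at this

@[simp] theorem nmul_zero (a : Ordinal.{u}) : a ⨳ 0 = 0 :=
  le_antisymm (nmul_le_iff.2 fun _ _ b hb =>
    absurd hb (not_lt_of_ge (zero_le : (0 : Ordinal.{u}) ≤ b))) (zero_le : (0 : Ordinal.{u}) ≤ _)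

@[simp] theorem zero_nmul (a : Ordinal.{u}) : 0 ⨳ a = 0 := by
  rw [nmul_comm, nmul_zero]

@[simp] theorem nmul_one (a : Ordinal.{u}) : a ⨳ 1 = a := by
  induction a using Ordinal.induction with
  | _ a IH =>
  apply le_antisymm
  · rw [nmul_le_iff]
    intro a' ha' b' hb'
    rw [Ordinal.lt_one_iff_zero] at hb'
    subst hb'
    simp only [nmul_zero, nadd_zero, IH a' ha']
    exact ha'
  · refine le_of_forall_lt fun c hc => lt_nmul_iff.2 ⟨c, hc, 0, zero_lt_one, ?_⟩
    simp only [nmul_zero, nadd_zero, IH c hc, le_refl]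

@[simp] theorem one_nmul (a : Ordinal.{u}) : 1 ⨳ a = a := by
  rw [nmul_comm, nmul_one]

theorem nmul_lt_nmul_of_pos_left {a b c : Ordinal.{u}} (h₁ : a < b) (h₂ : 0 < c) :
    c ⨳ a < c ⨳ b :=
  lt_nmul_iff.2 ⟨0, h₂, a, h₁, by simp⟩

theorem nmul_le_nmul_left {a b : Ordinal.{u}} (h : a ≤ b) (c : Ordinal.{u}) : c ⨳ a ≤ c ⨳ b := by
  rcases h.lt_or_eq with h₁ | rfl
  · rcases eq_zero_or_pos c with rfl | h₂
    · simp
    · exact (nmul_lt_nmul_of_pos_left h₁ h₂).le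
  · exact le_rfl

theorem nmul_le_nmul_right {a b : Ordinal.{u}} (h : a ≤ b) (c : Ordinal.{u}) :
    a ⨳ c ≤ b ⨳ c := by
  rw [nmul_comm a, nmul_comm b]; exact nmul_le_nmul_left h c

theorem nmul_nadd (a b c : Ordinal.{u}) : a ⨳ (b ♯ c) = a ⨳ b ♯ a ⨳ c := by
  induction a using Ordinal.induction generalizing b c with
  | _ a IHa =>
  induction b using Ordinal.induction generalizing c with
  | _ b IHb =>
  induction c using Ordinal.induction with
  | _ c IHc =>
  apply le_antisymm
  · rw [nmul_le_iff]
    intro a' ha d hd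
    rw [IHa a' ha b c]
    rcases lt_nadd_iff.1 hd with ⟨b', hb, hd⟩ | ⟨c', hc, hd⟩
    · have := nadd_lt_nadd_of_lt_of_le (nmul_nadd_lt ha hb) (nmul_nadd_le ha.le hd)
      rw [IHa a' ha b' c, IHb b' hb c] at this
      have h2 : (a ⨳ b' ♯ a' ⨳ b') ♯ (a' ⨳ b ♯ a' ⨳ c ♯ a ⨳ d) <
          (a ⨳ b' ♯ a' ⨳ b') ♯ (a ⨳ b ♯ a ⨳ c ♯ a' ⨳ d) := by
        convert this using 1 <;> ac_rfl
      exact (nadd_lt_nadd_iff_left _).1 h2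
    · have := nadd_lt_nadd_of_lt_of_le (nmul_nadd_lt ha hc) (nmul_nadd_le ha.le hd)
      rw [IHa a' ha b c', IHc c' hc] at this
      have h2 : (a ⨳ c' ♯ a' ⨳ c') ♯ (a' ⨳ b ♯ a' ⨳ c ♯ a ⨳ d) <
          (a ⨳ c' ♯ a' ⨳ c') ♯ (a ⨳ b ♯ a ⨳ c ♯ a' ⨳ d) := by
        convert this using 1 <;> ac_rfl
      exact (nadd_lt_nadd_iff_left _).1 h2
  · rw [nadd_le_iff]
    constructor
    · intro d hd
      rcases lt_nmul_iff.1 hd with ⟨a', ha, b', hb, hd⟩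
      have := nadd_lt_nadd_of_le_of_lt hd (nmul_nadd_lt ha (nadd_lt_nadd_right hb c))
      rw [IHa a' ha b c, IHb b' hb c, IHa a' ha b' c] at this
      have h2 : (a' ⨳ b' ♯ a' ⨳ b ♯ a' ⨳ c ♯ a ⨳ b') ♯ (d ♯ a ⨳ c) <
          (a' ⨳ b' ♯ a' ⨳ b ♯ a' ⨳ c ♯ a ⨳ b') ♯ a ⨳ (b ♯ c) := by
        convert this using 1 <;> ac_rfl
      exact (nadd_lt_nadd_iff_left _).1 h2
    · intro d hd
      rcases lt_nmul_iff.1 hd with ⟨a', ha, c', hc, hd⟩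
      have := nadd_lt_nadd_of_le_of_lt hd (nmul_nadd_lt ha (nadd_lt_nadd_left hc b))
      rw [IHa a' ha b c, IHc c' hc, IHa a' ha b c'] at this
      have h2 : (a' ⨳ c' ♯ a' ⨳ b ♯ a' ⨳ c ♯ a ⨳ c') ♯ (a ⨳ b ♯ d) <
          (a' ⨳ c' ♯ a' ⨳ b ♯ a' ⨳ c ♯ a ⨳ c') ♯ a ⨳ (b ♯ c) := by
        convert this using 1 <;> ac_rfl
      exact (nadd_lt_nadd_iff_left _).1 h2

theorem nadd_nmul (a b c : Ordinal.{u}) : (a ♯ b) ⨳ c = a ⨳ c ♯ b ⨳ c := by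
  rw [nmul_comm (a ♯ b), nmul_nadd, nmul_comm c, nmul_comm c]

theorem nmul_nadd_one (a b : Ordinal.{u}) : a ⨳ (b ♯ 1) = a ⨳ b ♯ a := by
  rw [nmul_nadd, nmul_one]

theorem nadd_one_nmul (a b : Ordinal.{u}) : (a ♯ 1) ⨳ b = a ⨳ b ♯ b := by
  rw [nadd_nmul, one_nmul]

theorem nmul_add_one (a b : Ordinal.{u}) : a ⨳ (b + 1) = a ⨳ b ♯ a := by
  rw [← nadd_one, nmul_nadd_one]

theorem mul_le_nmul (a b : Ordinal.{u}) : a * b ≤ a ⨳ b := by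
  induction b using Ordinal.induction with
  | _ b IH =>
  refine le_of_forall_lt fun c hc => ?_
  obtain ⟨q, hq, r, hr, rfl⟩ := Ordinal.lt_mul_iff.1 hc
  calc a * q + r ≤ a ⨳ q ♯ r := (add_le_add_left (IH q hq) r).trans (add_le_nadd _ _)
    _ < a ⨳ q ♯ a := nadd_lt_nadd_left hr _
    _ = a ⨳ (q + 1) := (nmul_add_one a q).symm
    _ ≤ a ⨳ b := nmul_le_nmul_left (Order.add_one_le_of_lt hq) a

theorem nadd3_lt {a b c a' b' c' : Ordinal.{u}} (ha : a' ≤ a) (hb : b' ≤ b) (hc : c' ≤ c)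
    (h : a' < a ∨ b' < b ∨ c' < c) : a' ♯ b' ♯ c' < a ♯ b ♯ c := by
  rcases h with h | h | h
  · exact nadd_lt_nadd_of_lt_of_le (nadd_lt_nadd_of_lt_of_le h hb) hc
  · exact nadd_lt_nadd_of_lt_of_le (nadd_lt_nadd_of_le_of_lt ha h) hc
  · exact nadd_lt_nadd_of_le_of_lt (nadd_le_nadd ha hb) h

theorem nmul_le_of₃ {a b c d : Ordinal.{u}}
    (H : ∀ a' < a, ∀ b' < b, ∀ c' < c, a' ⨳ b ⨳ c ♯ a ⨳ b' ⨳ c ♯ a ⨳ b ⨳ c' ♯ a' ⨳ b' ⨳ c' <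
      d ♯ a' ⨳ b' ⨳ c ♯ a' ⨳ b ⨳ c' ♯ a ⨳ b' ⨳ c') : a ⨳ b ⨳ c ≤ d := by
  by_contra hlt
  rw [not_le] at hlt
  obtain ⟨e, he, c', hc, H₁⟩ := lt_nmul_iff.1 hlt
  obtain ⟨a', ha, b', hb, H₂⟩ := lt_nmul_iff.1 he
  have H₃ := nmul_nadd_le H₂ hc.le
  rw [nadd_nmul, nadd_nmul, nadd_nmul, nadd_nmul] at H₃
  have H₄ := nadd_le_nadd H₁ H₃
  have H₅ : (e ⨳ c' ♯ e ⨳ c) ♯ (d ♯ a' ⨳ b' ⨳ c ♯ a' ⨳ b ⨳ c' ♯ a ⨳ b' ⨳ c') ≤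
      (e ⨳ c' ♯ e ⨳ c) ♯ (a' ⨳ b ⨳ c ♯ a ⨳ b' ⨳ c ♯ a ⨳ b ⨳ c' ♯ a' ⨳ b' ⨳ c') := by
    convert H₄ using 1 <;> ac_rfl
  rw [nadd_le_nadd_iff_left] at H₅
  exact absurd (H a' ha b' hb c' hc) (not_lt.2 H₅)

theorem nmul_nadd_lt₃' {a b c a' b' c' : Ordinal.{u}} (ha : a' < a) (hb : b' < b) (hc : c' < c) :
    a' ⨳ (b ⨳ c) ♯ a ⨳ (b' ⨳ c) ♯ a ⨳ (b ⨳ c') ♯ a' ⨳ (b' ⨳ c') <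
      a ⨳ (b ⨳ c) ♯ a' ⨳ (b' ⨳ c) ♯ a' ⨳ (b ⨳ c') ♯ a ⨳ (b' ⨳ c') := by
  have := nmul_nadd_lt ha (nmul_nadd_lt hb hc)
  rw [nmul_nadd, nmul_nadd, nmul_nadd, nmul_nadd] at this
  convert this using 1 <;> ac_rfl

theorem nmul_assoc (a b c : Ordinal.{u}) : a ⨳ b ⨳ c = a ⨳ (b ⨳ c) := by
  suffices H : ∀ s : Ordinal.{u}, ∀ a b c : Ordinal.{u}, a ♯ b ♯ c = s →
      a ⨳ b ⨳ c = a ⨳ (b ⨳ c) from H _ a b c rfl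
  intro s
  induction s using Ordinal.induction with
  | _ s IH =>
  have D1 : ∀ a b c : Ordinal.{u}, a ♯ b ♯ c = s → a ⨳ b ⨳ c ≤ a ⨳ (b ⨳ c) := by
    intro a b c hs
    have E : ∀ x y z : Ordinal.{u}, x ≤ a → y ≤ b → z ≤ c → (x < a ∨ y < b ∨ z < c) →
        x ⨳ y ⨳ z = x ⨳ (y ⨳ z) := fun x y z hx hy hz h =>
      IH _ ((nadd3_lt hx hy hz h).trans_eq hs) x y z rfl
    apply nmul_le_of₃
    intro a' ha b' hb c' hc
    rw [E a' b c ha.le le_rfl le_rfl (Or.inl ha),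
      E a b' c le_rfl hb.le le_rfl (Or.inr (Or.inl hb)),
      E a b c' le_rfl le_rfl hc.le (Or.inr (Or.inr hc)),
      E a' b' c' ha.le hb.le hc.le (Or.inl ha),
      E a' b' c ha.le hb.le le_rfl (Or.inl ha),
      E a' b c' ha.le le_rfl hc.le (Or.inl ha),
      E a b' c' le_rfl hb.le hc.le (Or.inr (Or.inl hb))]
    exact nmul_nadd_lt₃' ha hb hc
  intro a b c hs
  apply le_antisymm (D1 a b c hs)
  have h' : c ♯ b ♯ a = s := by rw [← hs]; ac_rfl
  have := D1 c b a h'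
  rw [nmul_comm a (b ⨳ c), nmul_comm b c, nmul_comm (a ⨳ b) c, nmul_comm a b]
  exact this

end Ordinal

namespace ThreeTwoAux

/-- decomposition: any `x < ω^e` (with `e > 0`) is below `ω^d * n` for some `d < e`, `n : ℕ`. -/
theorem decomp {e x : Ordinal} (he : 0 < e) (hx : x < ω ^ e) :
    ∃ d < e, ∃ n : ℕ, x < ω ^ d * n := by
  rcases eq_or_ne x 0 with rfl | hx0
  · exact ⟨0, he, 1, by simp⟩
  · have hlog : Ordinal.log ω x < e := (lt_opow_iff_log_lt one_lt_omega0 hx0).1 hx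
    set d := Ordinal.log ω x with hd
    have hωd : (ω : Ordinal) ^ d ≠ 0 := opow_ne_zero _ omega0_ne_zero
    have hdiv : x / ω ^ d < ω := by
      rw [div_lt hωd, ← opow_succ]
      exact lt_opow_succ_log_self one_lt_omega0 x
    obtain ⟨n, hn⟩ := lt_omega0.1 hdiv
    refine ⟨d, hlog, n + 1, ?_⟩
    calc x = ω ^ d * (x / ω ^ d) + x % ω ^ d := (div_add_mod x _).symm
      _ < ω ^ d * n + ω ^ d := by
          apply add_lt_add_of_le_of_lt
          · exact mul_le_mul_right (le_of_eq hn) _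
          · exact mod_lt x hωd
      _ = ω ^ d * ((n : Ordinal) + 1) := by rw [mul_add_one]
      _ = ω ^ d * ((n + 1 : ℕ) : Ordinal) := by push_cast; rfl

/-- The grand induction: closure of `ω^e` under natural addition, absorption of small
terms into ordinal addition, and coefficient addition. -/
theorem grand (e : Ordinal) :
    (∀ x y, x < ω ^ e → y < ω ^ e → x ♯ y < ω ^ e) ∧
    (∀ (m : ℕ) (r : Ordinal), r < ω ^ e → ω ^ e * m ♯ r = ω ^ e * m + r) ∧
    (∀ m k : ℕ, ω ^ e * m ♯ ω ^ e * k ≤ ω ^ e * (m + k : ℕ)) := by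
  induction e using Ordinal.induction with
  | h e IH =>
  have hωe : (ω : Ordinal) ^ e ≠ 0 := opow_ne_zero _ omega0_ne_zero
  -- Part A : closure under ♯
  have A : ∀ x y, x < ω ^ e → y < ω ^ e → x ♯ y < ω ^ e := by
    rcases eq_or_ne e 0 with rfl | he0
    · intro x y hx hy
      rw [opow_zero] at hx hy ⊢
      rw [Ordinal.lt_one_iff_zero] at hx hy
      subst hx; subst hy; simp
    · have he : 0 < e := pos_iff_ne_zero.2 he0
      intro x y hx hy
      obtain ⟨d₁, hd₁, n₁, hn₁⟩ := decomp he hx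
      obtain ⟨d₂, hd₂, n₂, hn₂⟩ := decomp he hy
      set d := max d₁ d₂ with hdd
      have hd : d < e := max_lt hd₁ hd₂
      have hωd : (ω : Ordinal) ^ d ≠ 0 := opow_ne_zero _ omega0_ne_zero
      obtain ⟨Ad, L1d, L2d⟩ := IH d hd
      set N := n₁ + n₂ with hN
      have hx' : x < ω ^ d * N := by
        refine hn₁.trans_le (mul_le_mul' (opow_le_opow_right omega0_pos (le_max_left _ _)) ?_)
        exact_mod_cast Nat.le_add_right n₁ n₂
      have hy' : y < ω ^ d * N := by
        refine hn₂.trans_le (mul_le_mul' (opow_le_opow_right omega0_pos (le_max_right _ _)) ?_)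
        exact_mod_cast Nat.le_add_left n₂ n₁
      -- decompose x and y at level d
      obtain ⟨i, hi⟩ := lt_omega0.1 (((div_lt hωd).2 hx').trans (nat_lt_omega0 N))
      obtain ⟨j, hj⟩ := lt_omega0.1 (((div_lt hωd).2 hy').trans (nat_lt_omega0 N))
      have hxdec : x ≤ ω ^ d * i ♯ x % ω ^ d := by
        calc x = ω ^ d * (x / ω ^ d) + x % ω ^ d := (div_add_mod x _).symm
          _ = ω ^ d * i + x % ω ^ d := by rw [hi]
          _ ≤ ω ^ d * i ♯ x % ω ^ d := add_le_nadd _ _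
      have hydec : y ≤ ω ^ d * j ♯ y % ω ^ d := by
        calc y = ω ^ d * (y / ω ^ d) + y % ω ^ d := (div_add_mod y _).symm
          _ = ω ^ d * j + y % ω ^ d := by rw [hj]
          _ ≤ ω ^ d * j ♯ y % ω ^ d := add_le_nadd _ _
      have hrs : x % ω ^ d ♯ y % ω ^ d < ω ^ d := Ad _ _ (mod_lt x hωd) (mod_lt y hωd)
      calc x ♯ y ≤ (ω ^ d * i ♯ x % ω ^ d) ♯ (ω ^ d * j ♯ y % ω ^ d) := nadd_le_nadd hxdec hydec
        _ = (ω ^ d * i ♯ ω ^ d * j) ♯ (x % ω ^ d ♯ y % ω ^ d) := by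
            rw [← nadd_assoc, nadd_right_comm (ω ^ d * (i:Ordinal)), nadd_assoc]
        _ ≤ ω ^ d * (i + j : ℕ) ♯ (x % ω ^ d ♯ y % ω ^ d) := nadd_le_nadd_right (L2d i j) _
        _ = ω ^ d * (i + j : ℕ) + (x % ω ^ d ♯ y % ω ^ d) := L1d _ _ hrs
        _ < ω ^ d * (i + j : ℕ) + ω ^ d := add_lt_add_right hrs _
        _ = ω ^ d * ((i + j : ℕ) + 1) := by rw [mul_add_one]
        _ < ω ^ d * ω := by
            apply mul_lt_mul_of_pos_left _ (opow_pos d omega0_pos)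
            have : ((i + j : ℕ) : Ordinal) + 1 = ((i + j + 1 : ℕ) : Ordinal) := by push_cast; rfl
            rw [this]; exact nat_lt_omega0 _
        _ = ω ^ succ d := (opow_succ ω d).symm
        _ ≤ ω ^ e := opow_le_opow_right omega0_pos (succ_le_of_lt hd)
  -- Part L1 : ω^e * m ♯ r = ω^e * m + r for r < ω^e
  have L1 : ∀ (m : ℕ) (r : Ordinal), r < ω ^ e → ω ^ e * m ♯ r = ω ^ e * m + r := by
    intro m
    induction m using Nat.strong_induction_on with
    | _ m IHm =>
    intro r
    induction r using Ordinal.induction with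
    | h r IHr =>
    intro hr
    refine le_antisymm ?_ (add_le_nadd _ _)
    rw [nadd_le_iff]
    constructor
    · intro x' hx'
      obtain ⟨i, hi⟩ := lt_omega0.1 (((div_lt hωe).2 hx').trans (nat_lt_omega0 m))
      have him : i < m := by
        have := (div_lt hωe).2 hx'
        rw [hi] at this
        exact_mod_cast this
      have hs : x' % ω ^ e < ω ^ e := mod_lt x' hωe
      have hx'dec : x' ≤ ω ^ e * i ♯ x' % ω ^ e := by
        calc x' = ω ^ e * (x' / ω ^ e) + x' % ω ^ e := (div_add_mod x' _).symm
          _ = ω ^ e * i + x' % ω ^ e := by rw [hi]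
          _ ≤ ω ^ e * i ♯ x' % ω ^ e := add_le_nadd _ _
      have hsr : x' % ω ^ e ♯ r < ω ^ e := A _ _ hs hr
      calc x' ♯ r ≤ (ω ^ e * i ♯ x' % ω ^ e) ♯ r := nadd_le_nadd_right hx'dec r
        _ = ω ^ e * i ♯ (x' % ω ^ e ♯ r) := nadd_assoc _ _ _
        _ = ω ^ e * i + (x' % ω ^ e ♯ r) := IHm i him _ hsr
        _ < ω ^ e * i + ω ^ e := add_lt_add_right hsr _
        _ = ω ^ e * ((i : Ordinal) + 1) := by rw [mul_add_one]
        _ ≤ ω ^ e * m := by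
            apply mul_le_mul_right
            have : ((i : Ordinal) + 1) = ((i + 1 : ℕ) : Ordinal) := by push_cast; rfl
            rw [this]; exact_mod_cast him
        _ ≤ ω ^ e * m + r := le_add_right le_rfl
    · intro r' hr'
      rw [IHr r' hr' (hr'.trans hr)]
      exact add_lt_add_right hr' _
  -- Part L2 : coefficient addition
  have L2 : ∀ m k : ℕ, ω ^ e * m ♯ ω ^ e * k ≤ ω ^ e * (m + k : ℕ) := by
    suffices H : ∀ n m k : ℕ, m + k ≤ n → ω ^ e * m ♯ ω ^ e * k ≤ ω ^ e * (m + k : ℕ) by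
      intro m k; exact H (m + k) m k le_rfl
    intro n
    induction n with
    | zero =>
      intro m k hmk
      obtain ⟨rfl, rfl⟩ : m = 0 ∧ k = 0 := by omega
      simp
    | succ n IHn =>
      intro m k hmk
      have key : ∀ p q : ℕ, p + q ≤ n + 1 → ∀ x' < ω ^ e * (p : Ordinal),
          x' ♯ ω ^ e * q < ω ^ e * (p + q : ℕ) := by
        intro p q hpq x' hx'
        obtain ⟨i, hi⟩ := lt_omega0.1 (((div_lt hωe).2 hx').trans (nat_lt_omega0 p))
        have hip : i < p := by
          have := (div_lt hωe).2 hx'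
          rw [hi] at this
          exact_mod_cast this
        have hs : x' % ω ^ e < ω ^ e := mod_lt x' hωe
        have hx'dec : x' ≤ ω ^ e * i ♯ x' % ω ^ e := by
          calc x' = ω ^ e * (x' / ω ^ e) + x' % ω ^ e := (div_add_mod x' _).symm
            _ = ω ^ e * i + x' % ω ^ e := by rw [hi]
            _ ≤ ω ^ e * i ♯ x' % ω ^ e := add_le_nadd _ _
        calc x' ♯ ω ^ e * q ≤ (ω ^ e * i ♯ x' % ω ^ e) ♯ ω ^ e * q :=
              nadd_le_nadd_right hx'dec _
          _ = (ω ^ e * i ♯ ω ^ e * q) ♯ x' % ω ^ e := nadd_right_comm _ _ _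
          _ ≤ ω ^ e * (i + q : ℕ) ♯ x' % ω ^ e := by
              apply nadd_le_nadd_right
              exact IHn i q (by omega)
          _ = ω ^ e * (i + q : ℕ) + x' % ω ^ e := L1 _ _ hs
          _ < ω ^ e * (i + q : ℕ) + ω ^ e := add_lt_add_right hs _
          _ = ω ^ e * ((i + q : ℕ) + 1) := by rw [mul_add_one]
          _ ≤ ω ^ e * (p + q : ℕ) := by
              apply mul_le_mul_right
              have : ((i + q : ℕ) : Ordinal) + 1 = ((i + q + 1 : ℕ) : Ordinal) := by
                push_cast; rfl
              rw [this]; exact_mod_cast (by omega : i + q + 1 ≤ p + q)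
      rw [nadd_le_iff]
      constructor
      · intro x' hx'
        exact key m k hmk x' hx'
      · intro y' hy'
        rw [nadd_comm]
        have := key k m (by omega) y' hy'
        rwa [Nat.add_comm k m] at this
  exact ⟨A, L1, L2⟩

theorem nadd_lt_opow (e : Ordinal) {x y : Ordinal} (hx : x < ω ^ e) (hy : y < ω ^ e) :
    x ♯ y < ω ^ e := (grand e).1 x y hx hy

theorem absorb (e : Ordinal) (m : ℕ) {r : Ordinal} (hr : r < ω ^ e) :
    ω ^ e * m ♯ r = ω ^ e * m + r := (grand e).2.1 m r hr

theorem coeff_add (e : Ordinal) (m k : ℕ) :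
    ω ^ e * m ♯ ω ^ e * k ≤ ω ^ e * (m + k : ℕ) := (grand e).2.2 m k

/-- `ω^e ⨳ n ≤ ω^e * n` -/
theorem nmul_natCast_le (e : Ordinal) (n : ℕ) : ω ^ e ⨳ (n : Ordinal) ≤ ω ^ e * n := by
  induction n with
  | zero => simp
  | succ n IH =>
    have hc : ((n + 1 : ℕ) : Ordinal) = (n : Ordinal) + 1 := by push_cast; rfl
    rw [hc, nmul_add_one]
    calc ω ^ e ⨳ (n : Ordinal) ♯ ω ^ e ≤ ω ^ e * n ♯ ω ^ e * (1 : ℕ) := by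
          rw [Nat.cast_one, mul_one]
          exact nadd_le_nadd_right IH _
      _ ≤ ω ^ e * ((n + 1 : ℕ) : Ordinal) := coeff_add e n 1
      _ = ω ^ e * ((n : Ordinal) + 1) := by rw [hc]

/-- Natural product of `ω`-powers is bounded by the `ω`-power of the natural sum. -/
theorem nmul_opow_le (a b : Ordinal) : ω ^ a ⨳ ω ^ b ≤ ω ^ (a ♯ b) := by
  suffices H : ∀ c a b : Ordinal, a ♯ b = c → ω ^ a ⨳ ω ^ b ≤ ω ^ c from H _ a b rfl
  intro c
  induction c using Ordinal.induction with
  | h c IHc =>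
  intro a b hab
  have aux : ∀ p q x : Ordinal, p ♯ q = c → x < ω ^ p → x ⨳ ω ^ q < ω ^ c := by
    intro p q x hpq hx
    rcases eq_or_ne x 0 with rfl | hx0
    · rw [zero_nmul]; exact opow_pos c omega0_pos
    · have hp : 0 < p := by
        rcases eq_zero_or_pos p with rfl | hp
        · rw [opow_zero, Ordinal.lt_one_iff_zero] at hx; exact absurd hx hx0
        · exact hp
      obtain ⟨d, hd, n, hn⟩ := decomp hp hx
      have hdq : d ♯ q < c := hpq ▸ nadd_lt_nadd_right hd q
      calc x ⨳ ω ^ q ≤ (ω ^ d * n) ⨳ ω ^ q := nmul_le_nmul_right hn.le _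
        _ ≤ (ω ^ d ⨳ (n : Ordinal)) ⨳ ω ^ q := nmul_le_nmul_right (mul_le_nmul _ _) _
        _ = (ω ^ d ⨳ ω ^ q) ⨳ (n : Ordinal) := by
            rw [nmul_assoc, nmul_comm (n : Ordinal), ← nmul_assoc]
        _ ≤ ω ^ (d ♯ q) ⨳ (n : Ordinal) := nmul_le_nmul_right (IHc _ hdq d q rfl) _
        _ ≤ ω ^ (d ♯ q) * n := nmul_natCast_le _ n
        _ < ω ^ (d ♯ q) * ω := mul_lt_mul_of_pos_left (nat_lt_omega0 n) (opow_pos _ omega0_pos)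
        _ = ω ^ succ (d ♯ q) := (opow_succ _ _).symm
        _ ≤ ω ^ c := opow_le_opow_right omega0_pos (succ_le_of_lt hdq)
  rw [nmul_le_iff]
  intro x hx y hy
  have h1 : x ⨳ ω ^ b < ω ^ c := aux a b x hab hx
  have h2 : ω ^ a ⨳ y < ω ^ c := by
    rw [nmul_comm]
    exact aux b a y ((nadd_comm b a).trans hab) hy
  exact (nadd_lt_opow c h1 h2).trans_le le_self_nadd

/-- nmul of natural number casts is the cast of the product. -/
theorem natCast_nmul (p q : ℕ) : (p : Ordinal) ⨳ (q : Ordinal) = ((p * q : ℕ) : Ordinal) := by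
  induction q with
  | zero => simp
  | succ q IH =>
    have hc : ((q + 1 : ℕ) : Ordinal) = (q : Ordinal) + 1 := by push_cast; rfl
    rw [hc, nmul_add_one, IH, nadd_nat]
    push_cast
    rw [mul_add, mul_one]

theorem three_opow_nat (t : ℕ) : (3 : Ordinal) ^ (t : Ordinal) = ((3 ^ t : ℕ) : Ordinal) := by
  have h := natCast_opow 3 t
  rw [Nat.cast_ofNat] at h
  exact h.symm

/-- key arithmetic fact: `3^δ ♯ 3^δ + 1 ≤ 3^δ * 3`. -/
theorem keydelta (δ : Ordinal) : ((3 : Ordinal) ^ δ ♯ 3 ^ δ) + 1 ≤ 3 ^ δ * 3 := by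
  rcases lt_or_ge δ ω with hδ | hδ
  · obtain ⟨t, rfl⟩ := lt_omega0.1 hδ
    have h3 : (3 : Ordinal) ^ (t : Ordinal) = ((3 ^ t : ℕ) : Ordinal) := three_opow_nat t
    rw [h3, nadd_nat]
    have : ((3 ^ t : ℕ) : Ordinal) + (3 ^ t : ℕ) + 1 = ((3 ^ t + 3 ^ t + 1 : ℕ) : Ordinal) := by
      push_cast; ring
    rw [this]
    have h33 : ((3 ^ t : ℕ) : Ordinal) * 3 = ((3 ^ t * 3 : ℕ) : Ordinal) := by push_cast; ring
    rw [h33]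
    have : 3 ^ t + 3 ^ t + 1 ≤ 3 ^ t * 3 := by
      have := Nat.one_le_two_pow (n := t)
      have h1 : 1 ≤ 3 ^ t := Nat.one_le_pow t 3 (by norm_num)
      omega
    exact_mod_cast this
  · -- δ ≥ ω : δ = ω * q + t
    set q := δ / ω with hq
    obtain ⟨t, ht⟩ := lt_omega0.1 (mod_lt δ omega0_ne_zero)
    have hδeq : δ = ω * q + t := by rw [hq, ← ht, div_add_mod]
    have hq1 : 1 ≤ q := by
      rw [hq, Ordinal.le_div omega0_ne_zero, mul_one]; exact hδ
    have h3ω : (3 : Ordinal) ^ ω = ω := opow_omega0 (by norm_num) (nat_lt_omega0 3)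
    have hm : (3 : Ordinal) ^ δ = ω ^ q * ((3 ^ t : ℕ) : Ordinal) := by
      rw [hδeq, opow_add, opow_mul, h3ω, three_opow_nat]
    rw [hm]
    have h1 : ω ^ q * ((3 ^ t : ℕ) : Ordinal) ♯ ω ^ q * ((3 ^ t : ℕ) : Ordinal) ≤
        ω ^ q * ((3 ^ t + 3 ^ t : ℕ) : Ordinal) := coeff_add q _ _
    have hωq1 : (1 : Ordinal) ≤ ω ^ q := one_le_iff_pos.2 (opow_pos q omega0_pos)
    calc (ω ^ q * ((3 ^ t : ℕ) : Ordinal) ♯ ω ^ q * ((3 ^ t : ℕ) : Ordinal)) + 1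
        ≤ ω ^ q * ((3 ^ t + 3 ^ t : ℕ) : Ordinal) + 1 := add_le_add_left h1 1
      _ ≤ ω ^ q * ((3 ^ t + 3 ^ t : ℕ) : Ordinal) + ω ^ q * 1 := by
          rw [mul_one]; exact add_le_add_right hωq1 _
      _ = ω ^ q * (((3 ^ t + 3 ^ t : ℕ) : Ordinal) + 1) := by rw [mul_add, mul_one]
      _ = ω ^ q * ((3 ^ t + 3 ^ t + 1 : ℕ) : Ordinal) := by rw [Nat.cast_add_one]
      _ ≤ ω ^ q * ((3 ^ t * 3 : ℕ) : Ordinal) := by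
          apply mul_le_mul_right
          have h1 : 1 ≤ 3 ^ t := Nat.one_le_pow t 3 (by norm_num)
          exact_mod_cast (by omega : 3 ^ t + 3 ^ t + 1 ≤ 3 ^ t * 3)
      _ = ω ^ q * ((3 ^ t : ℕ) : Ordinal) * 3 := by
          rw [mul_assoc]
          congr 1
          rw [show ((3 ^ t * 3 : ℕ) : Ordinal) = ((3 ^ t : ℕ) : Ordinal) * ((3 : ℕ) : Ordinal)
            from natCast_mul _ _, Nat.cast_ofNat]

end ThreeTwoAux

open ThreeTwoAux

theorem threeTwo_core {γ β : Ordinal} (h : γ < β) :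
    (threeTwo γ ♯ 1) ⨳ threeTwo γ ≤ threeTwo β := by
  rw [nadd_one_nmul]
  rcases lt_or_ge γ ω with hγ | hγ
  · -- γ finite
    obtain ⟨n, rfl⟩ := lt_omega0.1 hγ
    have hT : threeTwo (n : Ordinal) = ((3 ^ 3 ^ n : ℕ) : Ordinal) := by
      rw [threeTwo, three_opow_nat, three_opow_nat]
    set t : ℕ := 3 ^ 3 ^ n with hts
    have hS : threeTwo (n : Ordinal) ⨳ threeTwo (n : Ordinal) ♯ threeTwo (n : Ordinal) =
        ((t * t + t : ℕ) : Ordinal) := by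
      rw [hT, natCast_nmul, nadd_nat]
      push_cast; ring
    rw [hS]
    rcases lt_or_ge β ω with hβ | hβ
    · obtain ⟨k, rfl⟩ := lt_omega0.1 hβ
      have hnk : n < k := by exact_mod_cast h
      have hT' : threeTwo (k : Ordinal) = ((3 ^ 3 ^ k : ℕ) : Ordinal) := by
        rw [threeTwo, three_opow_nat, three_opow_nat]
      rw [hT']
      have ht3 : 3 ≤ t := by
        rw [hts]
        calc 3 = 3 ^ 1 := by norm_num
          _ ≤ 3 ^ 3 ^ n := Nat.pow_le_pow_right (by norm_num) (Nat.one_le_pow _ _ (by norm_num))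
      have hcube : t * t + t ≤ t * t * t := by nlinarith
      have hpow : t * t * t ≤ 3 ^ 3 ^ k := by
        have h1 : 3 ^ n * 3 ≤ 3 ^ k := by
          calc 3 ^ n * 3 = 3 ^ (n + 1) := by ring
            _ ≤ 3 ^ k := Nat.pow_le_pow_right (by norm_num) hnk
        calc t * t * t = 3 ^ (3 ^ n * 3) := by rw [hts]; rw [Nat.pow_mul]; ring
          _ ≤ 3 ^ 3 ^ k := Nat.pow_le_pow_right (by norm_num) h1
      exact_mod_cast hcube.trans hpow
    · -- β infinite : LHS is finite < ω ≤ threeTwo β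
      have h3ω : (3 : Ordinal) ^ ω = ω := opow_omega0 (by norm_num) (nat_lt_omega0 3)
      have hωβ : ω ≤ (3 : Ordinal) ^ β := by
        rw [← h3ω]; exact opow_le_opow_right (by norm_num) hβ
      have hωT' : ω ≤ threeTwo β := by
        rw [threeTwo, ← h3ω]
        exact opow_le_opow_right (by norm_num) hωβ
      exact le_trans (nat_lt_omega0 _).le hωT'
  · -- γ infinite, hence β infinite
    have hβ : ω ≤ β := hγ.trans h.le
    have h3ω : (3 : Ordinal) ^ ω = ω := opow_omega0 (by norm_num) (nat_lt_omega0 3)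
    set δ := γ - ω with hδ
    set δ' := β - ω with hδ'
    have hγeq : γ = ω + δ := (Ordinal.add_sub_cancel_of_le hγ).symm
    have hβeq : β = ω + δ' := (Ordinal.add_sub_cancel_of_le hβ).symm
    have hδδ' : δ < δ' := by
      have : ω + δ < ω + δ' := by rw [← hγeq, ← hβeq]; exact h
      exact (add_lt_add_iff_left ω).1 this
    set μ := (3 : Ordinal) ^ δ with hμ
    set μ' := (3 : Ordinal) ^ δ' with hμ'
    have hT : threeTwo γ = ω ^ μ := by
      rw [threeTwo, hγeq, opow_add, h3ω, opow_mul, h3ω]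
    have hT' : threeTwo β = ω ^ μ' := by
      rw [threeTwo, hβeq, opow_add, h3ω, opow_mul, h3ω]
    rw [hT, hT']
    have hμμ : μ ♯ μ < μ' := by
      have hkey : (μ ♯ μ) + 1 ≤ μ * 3 := keydelta δ
      have hμ3 : μ * 3 ≤ μ' := by
        calc μ * 3 = (3 : Ordinal) ^ (δ + 1) := by rw [hμ, opow_add, opow_one]
          _ ≤ (3 : Ordinal) ^ δ' := opow_le_opow_right (by norm_num) (succ_le_of_lt hδδ')
      have := hkey.trans hμ3
      exact lt_of_lt_of_le (lt_of_lt_of_le (lt_add_one _) this) le_rfl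
    apply le_of_lt
    calc ω ^ μ ⨳ ω ^ μ ♯ ω ^ μ ≤ ω ^ (μ ♯ μ) ♯ ω ^ (μ ♯ μ) := by
          apply nadd_le_nadd (nmul_opow_le μ μ)
          exact opow_le_opow_right omega0_pos le_self_nadd
      _ ≤ ω ^ (μ ♯ μ) * ((1 + 1 : ℕ) : Ordinal) := by
          have := coeff_add (μ ♯ μ) 1 1
          simpa using this
      _ < ω ^ (μ ♯ μ) * ω :=
          mul_lt_mul_of_pos_left (nat_lt_omega0 2) (opow_pos _ omega0_pos)
      _ = ω ^ succ (μ ♯ μ) := (opow_succ _ _).symm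
      _ ≤ ω ^ μ' := opow_le_opow_right omega0_pos (succ_le_of_lt hμμ)

/-- For ordinals `α, γ, β` with `γ < β` and `α ≥ 1`,
`(α ♯ α ⨳ 3_2(γ)) ⨳ 3_2(γ) ≤ α ⨳ 3_2(β)`, with natural sum `♯` and natural product `⨳`. -/
theorem nadd_nmul_threeTwo_le {α γ β : Ordinal} (h : γ < β) (hα : 1 ≤ α) :
    (α ♯ α ⨳ threeTwo γ) ⨳ threeTwo γ ≤ α ⨳ threeTwo β := by
  have hred : α ♯ α ⨳ threeTwo γ = α ⨳ (threeTwo γ ♯ 1) := by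
    rw [nmul_nadd_one, nadd_comm]
  rw [hred, nmul_assoc]
  exact nmul_le_nmul_left (threeTwo_core h) α
end

section
/- Inversion with negative antecedents (disjunction): in the infinitary intuitionistic calculus for arithmetic, if ⊢^α_1 Γ ⇒ B₀ ∨ B₁ and every formula in Γ is a negative formula (no ∨ or ∃ occurs in it), then ⊢^α_1 Γ ⇒ B_i for some i ∈ {0,1}. -/
open Ordinal

/-- Sentences of `L_HA`: closed equations (closed terms identified with their numeral
values), propositional connectives, and quantifiers represented by their ω-many
numeral instances. -/
inductive Sent : Type
  | eq (n m : ℕ)           -- the closed equation `n̄ = m̄`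
  | or (A B : Sent)
  | and (A B : Sent)
  | imp (A B : Sent)
  | ex (B : ℕ → Sent)      -- `∃x B(x)`, given by its instances `B(n̄)`
  | all (B : ℕ → Sent)     -- `∀x B(x)`, given by its instances `B(n̄)`

/-- Negative sentences: no disjunction and no existential quantifier occurs. -/
def isNegative : Sent → Prop
  | .eq _ _ => True
  | .or _ _ => False
  | .and A B => isNegative A ∧ isNegative B
  | .imp A B => isNegative A ∧ isNegative B
  | .ex _ => False
  | .all B => ∀ n, isNegative (B n)

/-- `Deriv cutOK α Γ C` : in the infinitary sequent calculus `HA^∞` (ω-rules for `L∃`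
and `R∀`), the sequent `Γ ⇒ C` has a derivation of depth `≤ α` in which every cut
formula satisfies `cutOK`.  Initial sequents: `Γ, ⊥ ⇒ A` and `Γ ⇒ ⊤`. -/
inductive Deriv (cutOK : Sent → Prop) : Ordinal → Set Sent → Sent → Prop
  | axBot {α Γ C n m} : n ≠ m → Sent.eq n m ∈ Γ → Deriv cutOK α Γ C
  | axTop {α Γ n} : Deriv cutOK α Γ (.eq n n)
  | orL {α γ₀ γ₁ Γ A₀ A₁ C} : γ₀ < α → γ₁ < α →
      Deriv cutOK γ₀ (insert A₀ Γ) C → Deriv cutOK γ₁ (insert A₁ Γ) C →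
      Deriv cutOK α (insert (.or A₀ A₁) Γ) C
  | orR₀ {α γ Γ A₀ A₁} : γ < α → Deriv cutOK γ Γ A₀ → Deriv cutOK α Γ (.or A₀ A₁)
  | orR₁ {α γ Γ A₀ A₁} : γ < α → Deriv cutOK γ Γ A₁ → Deriv cutOK α Γ (.or A₀ A₁)
  | andL₀ {α γ Γ A₀ A₁ C} : γ < α →
      Deriv cutOK γ (insert A₀ (insert (.and A₀ A₁) Γ)) C →
      Deriv cutOK α (insert (.and A₀ A₁) Γ) C
  | andL₁ {α γ Γ A₀ A₁ C} : γ < α →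
      Deriv cutOK γ (insert A₁ (insert (.and A₀ A₁) Γ)) C →
      Deriv cutOK α (insert (.and A₀ A₁) Γ) C
  | andR {α γ₀ γ₁ Γ A₀ A₁} : γ₀ < α → γ₁ < α →
      Deriv cutOK γ₀ Γ A₀ → Deriv cutOK γ₁ Γ A₁ → Deriv cutOK α Γ (.and A₀ A₁)
  | impL {α γ₀ γ₁ Γ A B C} : γ₀ < α → γ₁ < α →
      Deriv cutOK γ₀ (insert (.imp A B) Γ) A → Deriv cutOK γ₁ (insert B Γ) C →
      Deriv cutOK α (insert (.imp A B) Γ) C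
  | impR {α γ Γ A B} : γ < α → Deriv cutOK γ (insert A Γ) B →
      Deriv cutOK α Γ (.imp A B)
  | exL {α Γ B C} (γ : ℕ → Ordinal) : (∀ n, γ n < α) →
      (∀ n, Deriv cutOK (γ n) (insert (B n) Γ) C) →
      Deriv cutOK α (insert (.ex B) Γ) C
  | exR {α γ Γ B} (n : ℕ) : γ < α → Deriv cutOK γ Γ (B n) →
      Deriv cutOK α Γ (.ex B)
  | allL {α γ Γ B C} (n : ℕ) : γ < α →
      Deriv cutOK γ (insert (B n) (insert (.all B) Γ)) C →
      Deriv cutOK α (insert (.all B) Γ) C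
  | allR {α Γ B} (γ : ℕ → Ordinal) : (∀ n, γ n < α) →
      (∀ n, Deriv cutOK (γ n) Γ (B n)) → Deriv cutOK α Γ (.all B)
  | cut {α γ₀ γ₁ Γ Δ A C} : cutOK A → γ₀ < α → γ₁ < α →
      Deriv cutOK γ₀ Γ A → Deriv cutOK γ₁ (insert A Δ) C →
      Deriv cutOK α (Γ ∪ Δ) C

/-- `⊢^α_1 Γ ⇒ C` : derivability with depth `≤ α` and all cut formulas of rank `0`,
i.e. negative cut formulas. -/
def Deriv1 (α : Ordinal) (Γ : Set Sent) (C : Sent) : Prop := Deriv isNegative α Γ C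

theorem Deriv.mono {c : Sent → Prop} : ∀ {γ Γ C}, Deriv c γ Γ C → ∀ {α}, γ ≤ α →
    Deriv c α Γ C := by
  intro γ Γ C h
  induction h with
  | axBot hnm hmem => exact fun _ => .axBot hnm hmem
  | axTop => exact fun _ => .axTop
  | orL h0 h1 d0 d1 => exact fun hle => .orL (h0.trans_le hle) (h1.trans_le hle) d0 d1
  | orR₀ h0 d0 => exact fun hle => .orR₀ (h0.trans_le hle) d0
  | orR₁ h0 d0 => exact fun hle => .orR₁ (h0.trans_le hle) d0
  | andL₀ h0 d0 => exact fun hle => .andL₀ (h0.trans_le hle) d0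
  | andL₁ h0 d0 => exact fun hle => .andL₁ (h0.trans_le hle) d0
  | andR h0 h1 d0 d1 => exact fun hle => .andR (h0.trans_le hle) (h1.trans_le hle) d0 d1
  | impL h0 h1 d0 d1 => exact fun hle => .impL (h0.trans_le hle) (h1.trans_le hle) d0 d1
  | impR h0 d0 => exact fun hle => .impR (h0.trans_le hle) d0
  | exL γ h0 d0 => exact fun hle => .exL γ (fun n => (h0 n).trans_le hle) d0
  | exR n h0 d0 => exact fun hle => .exR n (h0.trans_le hle) d0
  | allL n h0 d0 => exact fun hle => .allL n (h0.trans_le hle) d0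
  | allR γ h0 d0 => exact fun hle => .allR γ (fun n => (h0 n).trans_le hle) d0
  | cut hA h0 h1 d0 d1 => exact fun hle => .cut hA (h0.trans_le hle) (h1.trans_le hle) d0 d1

private theorem key : ∀ {α Γ C}, Deriv isNegative α Γ C → ∀ B₀ B₁, C = .or B₀ B₁ →
    (∀ A ∈ Γ, isNegative A) →
    Deriv isNegative α Γ B₀ ∨ Deriv isNegative α Γ B₁ := by
  intro α Γ C h
  induction h with
  | axBot hnm hmem => exact fun B₀ B₁ _ _ => Or.inl (.axBot hnm hmem)
  | axTop => intro B₀ B₁ hC; exact absurd hC (by simp)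
  | orL h0 h1 d0 d1 =>
    intro B₀ B₁ _ hΓ
    exact absurd (hΓ _ (Set.mem_insert _ _)) (by simp [isNegative])
  | orR₀ h0 d0 => exact fun B₀ B₁ hC _ => Or.inl (by cases hC; exact d0.mono h0.le)
  | orR₁ h0 d0 => exact fun B₀ B₁ hC _ => Or.inr (by cases hC; exact d0.mono h0.le)
  | @andL₀ _ _ Γ' A₀ A₁ _ h0 d0 ih =>
    intro B₀ B₁ hC hΓ
    have hand := hΓ _ (Set.mem_insert _ _)
    have : ∀ A ∈ insert A₀ (insert (Sent.and A₀ A₁) Γ'), isNegative A := by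
      rintro A (rfl | hA)
      · exact hand.1
      · exact hΓ _ hA
    rcases ih B₀ B₁ hC this with h | h
    · exact Or.inl (.andL₀ h0 h)
    · exact Or.inr (.andL₀ h0 h)
  | @andL₁ _ _ Γ' A₀ A₁ _ h0 d0 ih =>
    intro B₀ B₁ hC hΓ
    have hand := hΓ _ (Set.mem_insert _ _)
    have : ∀ A ∈ insert A₁ (insert (Sent.and A₀ A₁) Γ'), isNegative A := by
      rintro A (rfl | hA)
      · exact hand.2
      · exact hΓ _ hA
    rcases ih B₀ B₁ hC this with h | h
    · exact Or.inl (.andL₁ h0 h)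
    · exact Or.inr (.andL₁ h0 h)
  | andR => intro B₀ B₁ hC; exact absurd hC (by simp)
  | @impL _ _ _ Γ' A B _ h0 h1 d0 d1 _ ih1 =>
    intro B₀ B₁ hC hΓ
    have himp := hΓ _ (Set.mem_insert _ _)
    have : ∀ X ∈ insert B Γ', isNegative X := by
      rintro X (rfl | hX)
      · exact himp.2
      · exact hΓ _ (Set.mem_insert_of_mem _ hX)
    rcases ih1 B₀ B₁ hC this with h | h
    · exact Or.inl (.impL h0 h1 d0 h)
    · exact Or.inr (.impL h0 h1 d0 h)
  | impR => intro B₀ B₁ hC; exact absurd hC (by simp)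
  | exL γ h0 d0 =>
    intro B₀ B₁ _ hΓ
    exact absurd (hΓ _ (Set.mem_insert _ _)) (by simp [isNegative])
  | exR => intro B₀ B₁ hC; exact absurd hC (by simp)
  | @allL _ _ Γ' Bf _ n h0 d0 ih =>
    intro B₀ B₁ hC hΓ
    have hall := hΓ _ (Set.mem_insert _ _)
    have : ∀ A ∈ insert (Bf n) (insert (Sent.all Bf) Γ'), isNegative A := by
      rintro A (rfl | hA)
      · exact hall n
      · exact hΓ _ hA
    rcases ih B₀ B₁ hC this with h | h
    · exact Or.inl (.allL n h0 h)
    · exact Or.inr (.allL n h0 h)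
  | allR => intro B₀ B₁ hC; exact absurd hC (by simp)
  | @cut _ _ _ Γ' Δ A _ hA h0 h1 d0 d1 _ ih1 =>
    intro B₀ B₁ hC hΓ
    have : ∀ X ∈ insert A Δ, isNegative X := by
      rintro X (rfl | hX)
      · exact hA
      · exact hΓ _ (Or.inr hX)
    rcases ih1 B₀ B₁ hC this with h | h
    · exact Or.inl (.cut hA h0 h1 d0 h)
    · exact Or.inr (.cut hA h0 h1 d0 h)

/-- Inversion with negative antecedents (disjunction): if `⊢^α_1 Γ ⇒ B₀ ∨ B₁` and
every formula of `Γ` is negative, then `⊢^α_1 Γ ⇒ B₀` or `⊢^α_1 Γ ⇒ B₁`. -/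
theorem inversion_or_negative {α : Ordinal} {Γ : Set Sent} {B₀ B₁ : Sent}
    (hΓ : ∀ A ∈ Γ, isNegative A) (h : Deriv1 α Γ (.or B₀ B₁)) :
    Deriv1 α Γ B₀ ∨ Deriv1 α Γ B₁ := key h B₀ B₁ rfl hΓ
end

section
/- Inversion with negative antecedents (existential): if ⊢^α_1 Γ ⇒ ∃x B(x) in the infinitary intuitionistic calculus and all formulas of Γ are negative (contain no ∨ and no ∃), then there exists n ∈ ω with ⊢^α_1 Γ ⇒ B(n̄). -/
open Ordinal

lemma Deriv.mono_s16 {cutOK : Sent → Prop} {α β : Ordinal} {Γ : Set Sent} {C : Sent}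
    (h : Deriv cutOK α Γ C) (hab : α ≤ β) : Deriv cutOK β Γ C := by
  cases h with
  | axBot hnm hmem => exact .axBot hnm hmem
  | axTop => exact .axTop
  | orL h0 h1 d0 d1 => exact .orL (h0.trans_le hab) (h1.trans_le hab) d0 d1
  | orR₀ h d => exact .orR₀ (h.trans_le hab) d
  | orR₁ h d => exact .orR₁ (h.trans_le hab) d
  | andL₀ h d => exact .andL₀ (h.trans_le hab) d
  | andL₁ h d => exact .andL₁ (h.trans_le hab) d
  | andR h0 h1 d0 d1 => exact .andR (h0.trans_le hab) (h1.trans_le hab) d0 d1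
  | impL h0 h1 d0 d1 => exact .impL (h0.trans_le hab) (h1.trans_le hab) d0 d1
  | impR h d => exact .impR (h.trans_le hab) d
  | exL γ hγ d => exact .exL γ (fun n => (hγ n).trans_le hab) d
  | exR n h d => exact .exR n (h.trans_le hab) d
  | allL n h d => exact .allL n (h.trans_le hab) d
  | allR γ hγ d => exact .allR γ (fun n => (hγ n).trans_le hab) d
  | cut hOK h0 h1 d0 d1 => exact .cut hOK (h0.trans_le hab) (h1.trans_le hab) d0 d1

lemma negInsert {A : Sent} {Γ : Set Sent} (hA : isNegative A)
    (hΓ : ∀ X ∈ Γ, isNegative X) : ∀ X ∈ insert A Γ, isNegative X := by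
  rintro X (rfl | hX)
  · exact hA
  · exact hΓ _ hX

lemma inv_ex_aux {α : Ordinal} {Γ : Set Sent} {C : Sent}
    (h : Deriv isNegative α Γ C) :
    ∀ B : ℕ → Sent, C = Sent.ex B → (∀ A ∈ Γ, isNegative A) →
      ∃ n, Deriv isNegative α Γ (B n) := by
  induction h with
  | axBot hnm hmem => exact fun B _ _ => ⟨0, .axBot hnm hmem⟩
  | axTop => intro B hC; cases hC
  | orL h0 h1 d0 d1 ih0 ih1 =>
      intro B hC hΓ
      exact absurd (hΓ _ (Set.mem_insert _ _)) (by simp [isNegative])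
  | orR₀ h d ih => intro B hC; cases hC
  | orR₁ h d ih => intro B hC; cases hC
  | @andL₀ _ _ _ A₀ A₁ _ h d ih =>
      intro B hC hΓ
      have hand := hΓ _ (Set.mem_insert _ _)
      obtain ⟨n, dn⟩ := ih B hC
        (negInsert hand.1 (negInsert hand (fun X hX => hΓ _ (Set.mem_insert_of_mem _ hX))))
      exact ⟨n, .andL₀ h dn⟩
  | @andL₁ _ _ _ A₀ A₁ _ h d ih =>
      intro B hC hΓ
      have hand := hΓ _ (Set.mem_insert _ _)
      obtain ⟨n, dn⟩ := ih B hC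
        (negInsert hand.2 (negInsert hand (fun X hX => hΓ _ (Set.mem_insert_of_mem _ hX))))
      exact ⟨n, .andL₁ h dn⟩
  | andR h0 h1 d0 d1 ih0 ih1 => intro B hC; cases hC
  | @impL _ _ _ _ A B' _ h0 h1 d0 d1 ih0 ih1 =>
      intro B hC hΓ
      have himp := hΓ _ (Set.mem_insert _ _)
      obtain ⟨n, dn⟩ := ih1 B hC
        (negInsert himp.2 (fun X hX => hΓ _ (Set.mem_insert_of_mem _ hX)))
      exact ⟨n, .impL h0 h1 d0 dn⟩
  | impR h d ih => intro B hC; cases hC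
  | exL γ hγ d ih =>
      intro B hC hΓ
      exact absurd (hΓ _ (Set.mem_insert _ _)) (by simp [isNegative])
  | exR n h d ih =>
      intro B hC hΓ
      cases hC
      exact ⟨n, d.mono_s16 h.le⟩
  | @allL _ _ _ B' _ n h d ih =>
      intro B hC hΓ
      have hall := hΓ _ (Set.mem_insert _ _)
      obtain ⟨m, dm⟩ := ih B hC
        (negInsert (hall n) (negInsert hall (fun X hX => hΓ _ (Set.mem_insert_of_mem _ hX))))
      exact ⟨m, .allL n h dm⟩
  | allR γ hγ d ih => intro B hC; cases hC
  | @cut _ _ _ Γ' Δ A _ hOK h0 h1 d0 d1 ih0 ih1 =>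
      intro B hC hΓ
      obtain ⟨n, dn⟩ := ih1 B hC
        (negInsert hOK (fun X hX => hΓ _ (Set.mem_union_right _ hX)))
      exact ⟨n, .cut hOK h0 h1 d0 dn⟩

/-- Inversion with negative antecedents (existential): if `⊢^α_1 Γ ⇒ ∃x B(x)` and
every formula of `Γ` is negative, then `⊢^α_1 Γ ⇒ B(n̄)` for some `n ∈ ω`. -/
theorem inversion_ex_negative {α : Ordinal} {Γ : Set Sent} {B : ℕ → Sent}
    (hΓ : ∀ A ∈ Γ, isNegative A) (h : Deriv1 α Γ (.ex B)) :
    ∃ n : ℕ, Deriv1 α Γ (B n) := inv_ex_aux h B rfl hΓ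
end
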